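/- (Variance identity, deterministic form of Lemma 1, second part.) Let h > 0 satisfy Ah ≤ a. Then ∫_0^T ∫_ℝ L_h(t−u)² f_Y(u) du dt = T ‖f_X‖₁ ‖K'‖₂² / (2 a h). -/

import Mathlib

open MeasureTheory Real

lemma aux_K_zero {A : ℝ} (hA : 0 < A) {K : ℝ → ℝ} (hK : ContDiff ℝ 1 K)
    (hKsupp : Function.support K ⊆ Set.Icc (-A) A) :
    ∀ x : ℝ, A ≤ |x| → K x = 0 := by
  have hKc : Continuous K := hK.continuous
  have hK0 : ∀ y : ℝ, y ∉ Set.Icc (-A) A → K y = 0 := fun y hy =>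
    Function.notMem_support.mp (fun hs => hy (hKsupp hs))
  have hKA : K A = 0 := by
    have h1 : Filter.Tendsto K (nhdsWithin A (Set.Ioi A)) (nhds (K A)) :=
      (hKc.tendsto A).mono_left nhdsWithin_le_nhds
    have h2 : Filter.Tendsto K (nhdsWithin A (Set.Ioi A)) (nhds 0) := by
      apply Filter.Tendsto.congr' _ tendsto_const_nhds
      filter_upwards [self_mem_nhdsWithin] with y hy
      have : A < y := hy
      exact (hK0 y (fun hc => absurd hc.2 (not_le.mpr this))).symm
    exact tendsto_nhds_unique h1 h2
  have hKnA : K (-A) = 0 := by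
    have h1 : Filter.Tendsto K (nhdsWithin (-A) (Set.Iio (-A))) (nhds (K (-A))) :=
      (hKc.tendsto (-A)).mono_left nhdsWithin_le_nhds
    have h2 : Filter.Tendsto K (nhdsWithin (-A) (Set.Iio (-A))) (nhds 0) := by
      apply Filter.Tendsto.congr' _ tendsto_const_nhds
      filter_upwards [self_mem_nhdsWithin] with y hy
      have : y < -A := hy
      exact (hK0 y (fun hc => absurd hc.1 (not_le.mpr this))).symm
    exact tendsto_nhds_unique h1 h2
  intro x hx
  rcases le_or_gt x 0 with hx0 | hx0
  · rw [abs_of_nonpos hx0] at hx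
    rcases eq_or_lt_of_le hx with heq | hlt
    · rw [show x = -A by linarith]; exact hKnA
    · exact hK0 x (fun hc => absurd hc.1 (by linarith))
  · rw [abs_of_pos hx0] at hx
    rcases eq_or_lt_of_le hx with heq | hlt
    · rw [show x = A from heq.symm]; exact hKA
    · exact hK0 x (fun hc => absurd hc.2 (by linarith))

lemma aux_deriv_zero {A : ℝ} (hA : 0 < A) {K : ℝ → ℝ} (hK : ContDiff ℝ 1 K)
    (hKsupp : Function.support K ⊆ Set.Icc (-A) A) :
    ∀ x : ℝ, A ≤ |x| → deriv K x = 0 := by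
  have hK0 := aux_K_zero hA hK hKsupp
  have hdiff : Differentiable ℝ K := hK.differentiable one_ne_zero
  intro x hx
  rcases le_or_gt x 0 with hx0 | hx0
  · rw [abs_of_nonpos hx0] at hx
    have hxA : x ≤ -A := by linarith
    have hzero : ∀ y ∈ Set.Iic (-A), K y = 0 := fun y hy => by
      have h1 : y ≤ -A := hy
      exact hK0 y (by rw [abs_of_nonpos (by linarith)]; linarith)
    have h1 : HasDerivWithinAt K (deriv K x) (Set.Iic (-A)) x :=
      (hdiff x).hasDerivAt.hasDerivWithinAt
    have h2 : HasDerivWithinAt K 0 (Set.Iic (-A)) x := by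
      have hc : HasDerivWithinAt (fun _ : ℝ => (0:ℝ)) 0 (Set.Iic (-A)) x :=
        (hasDerivAt_const x (0:ℝ)).hasDerivWithinAt
      exact hc.congr (fun y hy => hzero y hy) (hzero x hxA)
    exact (uniqueDiffOn_Iic (-A) x hxA).eq_deriv _ h1 h2
  · rw [abs_of_pos hx0] at hx
    have hxA : A ≤ x := hx
    have hzero : ∀ y ∈ Set.Ici A, K y = 0 := fun y hy => by
      have h1 : A ≤ y := hy
      exact hK0 y (by rw [abs_of_pos (by linarith)]; exact h1)
    have h1 : HasDerivWithinAt K (deriv K x) (Set.Ici A) x :=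
      (hdiff x).hasDerivAt.hasDerivWithinAt
    have h2 : HasDerivWithinAt K 0 (Set.Ici A) x := by
      have hc : HasDerivWithinAt (fun _ : ℝ => (0:ℝ)) 0 (Set.Ici A) x :=
        (hasDerivAt_const x (0:ℝ)).hasDerivWithinAt
      exact hc.congr (fun y hy => hzero y hy) (hzero x hxA)
    exact (uniqueDiffOn_Ici A x hxA).eq_deriv _ h1 h2

/-- Variance identity (deterministic form of Lemma 1, second part): for `h > 0` with
`Ah ≤ a`, `∫_0^T ∫_ℝ L_h(t−u)² f_Y(u) du dt = T ‖f_X‖₁ ‖K'‖₂² / (2ah)`. -/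
theorem stmt_7 (a A T : ℝ) (ha : 0 < a) (hA : 0 < A) (hT : 0 < T)
    (fX : ℝ → ℝ) (hfX_pos : ∀ x, 0 ≤ fX x) (hfX_int : Integrable fX)
    (fε : ℝ → ℝ) (hfε : fε = Set.indicator (Set.Icc (-a) a) fun _ => 1 / (2 * a))
    (fY : ℝ → ℝ) (hfY : ∀ x, fY x = ∫ u, fX (x - u) * fε u)
    (K : ℝ → ℝ) (hK : ContDiff ℝ 1 K)
    (hKsupp : Function.support K ⊆ Set.Icc (-A) A)
    (h : ℝ) (hh : 0 < h) (hha : A * h ≤ a)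
    (s : ℤ → ℝ) (hs : ∀ k, s k = if 0 ≤ k then 1 else -1)
    (L : ℝ → ℝ)
    (hL : ∀ x, L x = h⁻¹ * ∑' k : ℤ, s k * deriv K ((x - (2 * (k : ℝ) + 1) * a) / h)) :
    (∫ t in (0 : ℝ)..T, ∫ u, (L (t - u)) ^ 2 * fY u)
      = T * (∫ u, fX u) * (∫ x, (deriv K x) ^ 2) / (2 * a * h) := by
  have hg0 : ∀ x : ℝ, A ≤ |x| → deriv K x = 0 := aux_deriv_zero hA hK hKsupp
  have hgc : Continuous (deriv K) := hK.continuous_deriv le_rfl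
  have h2a : (0:ℝ) < 2 * a := by linarith
  have h2a0 : (2:ℝ) * a ≠ 0 := ne_of_gt h2a
  have hh0 : h ≠ 0 := ne_of_gt hh
  have hAah : A ≤ a / h := (le_div_iff₀ hh).mpr hha
  have hgz : ∀ z : ℝ, a ≤ |z| → deriv K (z / h) = 0 := by
    intro z hz
    apply hg0
    rw [abs_div, abs_of_pos hh, le_div_iff₀ hh]
    calc A * h ≤ a := hha
      _ ≤ |z| := hz
  -- each term of the tsum vanishes except possibly k = ⌊x / (2a)⌋
  have hterm : ∀ (x : ℝ) (k : ℤ), k ≠ ⌊x / (2*a)⌋ →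
      deriv K ((x - (2 * (k : ℝ) + 1) * a) / h) = 0 := by
    intro x k hk
    by_contra hne
    have habs : ¬ (A ≤ |(x - (2 * (k : ℝ) + 1) * a) / h|) := fun hle => hne (hg0 _ hle)
    push_neg at habs
    rw [abs_div, abs_of_pos hh] at habs
    have hlt : |x - (2 * (k : ℝ) + 1) * a| < a := by
      have := (div_lt_iff₀ hh).mp habs
      calc |x - (2 * (k : ℝ) + 1) * a| < A * h := this
        _ ≤ a := hha
    rw [abs_lt] at hlt
    apply hk
    symm
    rw [Int.floor_eq_iff]
    constructor
    · rw [le_div_iff₀ h2a]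
      nlinarith [hlt.1, hlt.2]
    · rw [div_lt_iff₀ h2a]
      push_cast
      nlinarith [hlt.1, hlt.2]
  -- the squared L is an explicit periodic function F
  set F : ℝ → ℝ := fun x => h⁻¹^2 * (deriv K ((x - (2 * ((⌊x / (2*a)⌋ : ℤ) : ℝ) + 1) * a) / h))^2
    with hFdef
  have hLF : ∀ x, (L x)^2 = F x := by
    intro x
    rw [hL x]
    have htsum : (∑' k : ℤ, s k * deriv K ((x - (2 * (k : ℝ) + 1) * a) / h))
        = s ⌊x / (2*a)⌋ * deriv K ((x - (2 * ((⌊x / (2*a)⌋ : ℤ) : ℝ) + 1) * a) / h) := by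
      apply tsum_eq_single
      intro k hk
      rw [hterm x k hk, mul_zero]
    rw [htsum, mul_pow, mul_pow, hs]
    have hs2 : (if (0:ℤ) ≤ ⌊x / (2*a)⌋ then (1:ℝ) else -1)^2 = 1 := by
      split_ifs <;> norm_num
    rw [hs2, one_mul]
  have hFper : Function.Periodic F (2*a) := by
    intro x
    have hdiv : (x + 2*a) / (2*a) = x / (2*a) + 1 := by field_simp
    have hfl : ⌊(x + 2*a) / (2*a)⌋ = ⌊x / (2*a)⌋ + 1 := by rw [hdiv, Int.floor_add_one]
    simp only [hFdef, hfl]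
    congr 2
    push_cast
    ring
  have hFmeas : Measurable F := by
    apply Measurable.mul measurable_const
    apply Measurable.pow _ measurable_const
    apply hgc.measurable.comp
    apply Measurable.div_const
    apply Measurable.sub measurable_id
    apply Measurable.mul _ measurable_const
    apply Measurable.add _ measurable_const
    apply Measurable.mul measurable_const
    exact measurable_from_top.comp (Int.measurable_floor.comp (measurable_id.div_const _))
  have hgb : ∃ M : ℝ, ∀ y, ‖deriv K y‖ ≤ M := by
    have hgcs : HasCompactSupport (deriv K) := by
      apply HasCompactSupport.intro (isCompact_Icc (a := -A) (b := A))
      intro x hx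
      apply hg0
      rcases le_or_gt x 0 with h1 | h1
      · rw [abs_of_nonpos h1]
        by_contra hc; push_neg at hc
        exact hx ⟨by linarith, by linarith⟩
      · rw [abs_of_pos h1]
        by_contra hc; push_neg at hc
        exact hx ⟨by linarith, by linarith⟩
    exact hgcs.exists_bound_of_continuous hgc
  obtain ⟨M, hM⟩ := hgb
  have hFbound : ∀ x, ‖F x‖ ≤ h⁻¹^2 * M^2 := by
    intro x
    rw [hFdef]
    simp only [norm_mul, norm_pow, Real.norm_eq_abs]
    rw [abs_of_nonneg (inv_nonneg.mpr hh.le)]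
    apply mul_le_mul_of_nonneg_left _ (by positivity)
    have := hM ((x - (2 * ((⌊x / (2*a)⌋ : ℤ) : ℝ) + 1) * a) / h)
    rw [Real.norm_eq_abs] at this
    have h0 : (0:ℝ) ≤ |deriv K ((x - (2 * ((⌊x / (2*a)⌋ : ℤ) : ℝ) + 1) * a) / h)| := abs_nonneg _
    nlinarith
  -- explicit formula for F on [0, 2a]
  have hFval : ∀ y ∈ Set.Icc (0:ℝ) (2*a), F y = h⁻¹^2 * (deriv K ((y - a) / h))^2 := by
    intro y hy
    rcases eq_or_lt_of_le hy.2 with heq | hlt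
    · subst heq
      have hfl : ⌊(2*a) / (2*a)⌋ = (1:ℤ) := by
        rw [div_self h2a0]; exact Int.floor_one
      simp only [hFdef, hfl]
      rw [hgz (2*a - (2 * ((1:ℤ):ℝ) + 1) * a) (by push_cast; rw [show 2*a - (2*(1:ℝ)+1)*a = -a by ring, abs_neg, abs_of_pos ha]),
        hgz (2*a - a) (by rw [show 2*a - a = a by ring, abs_of_pos ha])]
    · have hfl : ⌊y / (2*a)⌋ = (0:ℤ) := by
        rw [Int.floor_eq_zero_iff]
        constructor
        · exact div_nonneg hy.1 h2a.le
        · exact (div_lt_one h2a).mpr hlt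
      simp only [hFdef, hfl]
      norm_num
  -- key convolution identity
  have hconv : ∀ x : ℝ, (∫ v, F (x - v) * fε v) = (∫ y, (deriv K y)^2) / (2*a*h) := by
    intro x
    have step1 : (fun v => F (x - v) * fε v)
        = Set.indicator (Set.Icc (-a) a) (fun v => F (x - v) * (1 / (2*a))) := by
      funext v
      rw [hfε]
      by_cases hv : v ∈ Set.Icc (-a) a
      · rw [Set.indicator_of_mem hv, Set.indicator_of_mem hv]
      · rw [Set.indicator_of_notMem hv, Set.indicator_of_notMem hv, mul_zero]
    rw [step1, integral_indicator measurableSet_Icc, integral_mul_const,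
      MeasureTheory.integral_Icc_eq_integral_Ioc,
      ← intervalIntegral.integral_of_le (by linarith : (-a) ≤ a),
      intervalIntegral.integral_comp_sub_left F x]
    have hrw : (∫ w in (x - a)..(x - -a), F w) = ∫ w in (0:ℝ)..(2*a), F w := by
      have := hFper.intervalIntegral_add_eq (x - a) 0
      rw [show x - a + 2*a = x - -a by ring, zero_add] at this
      exact this
    rw [hrw]
    have hcongr : (∫ w in (0:ℝ)..(2*a), F w)
        = ∫ w in (0:ℝ)..(2*a), h⁻¹^2 * (deriv K ((w - a) / h))^2 := by
      apply intervalIntegral.integral_congr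
      intro y hy
      rw [Set.uIcc_of_le (by linarith : (0:ℝ) ≤ 2*a)] at hy
      exact hFval y hy
    rw [hcongr, intervalIntegral.integral_const_mul,
      intervalIntegral.integral_comp_sub_right (fun z => (deriv K (z / h))^2) a,
      intervalIntegral.integral_comp_div (fun y => (deriv K y)^2) hh0]
    have hext : (∫ y in (-a/h)..(a/h), (deriv K y)^2) = ∫ y, (deriv K y)^2 := by
      have hle : -a/h ≤ a/h := by
        rw [neg_div]
        have : 0 ≤ a/h := le_of_lt (div_pos ha hh)
        linarith
      rw [intervalIntegral.integral_of_le hle]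
      apply setIntegral_eq_integral_of_forall_compl_eq_zero
      intro y hy
      have hcase : y ≤ -a/h ∨ a/h < y := by
        by_contra hc
        push_neg at hc
        exact hy ⟨lt_of_lt_of_le (by linarith [hc.1]) le_rfl, hc.2⟩
      have : A ≤ |y| := by
        rcases hcase with h1 | h1
        · rw [neg_div] at h1
          calc A ≤ a/h := hAah
            _ ≤ |y| := by rw [abs_of_nonpos (by linarith [div_pos ha hh])]; linarith
        · calc A ≤ a/h := hAah
            _ ≤ |y| := by rw [abs_of_pos (by linarith [div_pos ha hh])]; linarith
      rw [hg0 y this]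
      ring
    rw [show (0:ℝ) - a = -a by ring, show 2*a - a = a by ring]
    rw [show -a/h = (-a)/h by rw [neg_div]] at hext
    rw [hext, smul_eq_mul]
    field_simp
  -- inner integral is constant in t
  have hinner : ∀ t : ℝ, (∫ u, (L (t - u))^2 * fY u)
      = (∫ u, fX u) * ((∫ y, (deriv K y)^2) / (2*a*h)) := by
    intro t
    have hLrw : (fun u => (L (t - u))^2 * fY u) = fun u => F (t - u) * fY u := by
      funext u; rw [hLF]
    rw [hLrw]
    have hfε_int : Integrable fε := by
      rw [hfε]
      exact (integrable_indicator_iff measurableSet_Icc).mpr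
        (integrableOn_const measure_Icc_lt_top.ne)
    have hbase : Integrable (fun p : ℝ × ℝ => fX p.2 * fε (p.1 - p.2))
        (volume.prod volume) := by
      have := hfX_int.convolution_integrand (ContinuousLinearMap.mul ℝ ℝ) hfε_int
      exact this
    have hQint : Integrable (fun p : ℝ × ℝ => F (t - p.1) * (fX p.2 * fε (p.1 - p.2)))
        (volume.prod volume) := by
      apply hbase.bdd_mul
      · exact (hFmeas.comp (measurable_const.sub measurable_fst)).aestronglyMeasurable
      · exact Filter.Eventually.of_forall (fun p => hFbound _)
    calc (∫ u, F (t - u) * fY u)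
        = ∫ u, ∫ w, F (t - u) * (fX w * fε (u - w)) := by
          congr 1; funext u
          rw [hfY u, ← integral_const_mul]
          have := MeasureTheory.integral_sub_left_eq_self
            (fun w => F (t - u) * (fX w * fε (u - w))) (volume : Measure ℝ) u
          rw [← this]
          congr 1; funext v
          rw [sub_sub_cancel]
      _ = ∫ w, ∫ u, F (t - u) * (fX w * fε (u - w)) :=
          MeasureTheory.integral_integral_swap hQint
      _ = ∫ w, fX w * ∫ u, F (t - u) * fε (u - w) := by
          congr 1; funext w
          rw [← integral_const_mul]
          congr 1; funext u
          ring
      _ = ∫ w, fX w * ((∫ y, (deriv K y)^2) / (2*a*h)) := by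
          congr 1; funext w
          congr 1
          rw [← MeasureTheory.integral_add_right_eq_self
            (fun u => F (t - u) * fε (u - w)) w, ← hconv (t - w)]
          congr 1; funext x
          rw [add_sub_cancel_right]
          congr 2
          ring
      _ = (∫ u, fX u) * ((∫ y, (deriv K y)^2) / (2*a*h)) := by rw [integral_mul_const]
  rw [intervalIntegral.integral_congr
    (g := fun _ : ℝ => (∫ u, fX u) * ((∫ y, (deriv K y)^2) / (2*a*h)))
    (fun t _ => hinner t)]
  rw [intervalIntegral.integral_const, smul_eq_mul, sub_zero]
  ring
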